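/- If D is a 3-dicritical digraph on n vertices that is distinct from the bidirected complete graph ↔K3 and from the directed wheel W3, then the number of arcs of D is at most C(n,2) + (2/3)·n. -/

import Mathlib

/-- A (loopless, simple) digraph on vertex type `V`. -/
structure SimpleDigraph (V : Type) where
  Adj : V → V → Prop
  loopless : ∀ v, ¬ Adj v v

namespace SimpleDigraph

/-- A set of arcs (given as a relation) is acyclic if it admits no directed closed walk. -/
def AcyclicRel {V : Type} (A : V → V → Prop) : Prop :=
  ∀ v, ¬ Relation.TransGen A v v

/-- A set of arcs is 2-dicolourable if the vertices can be coloured with two colours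
so that each colour class induces an acyclic subdigraph. -/
def Dicolourable2Rel {V : Type} (A : V → V → Prop) : Prop :=
  ∃ φ : V → Fin 2, ∀ i : Fin 2,
    AcyclicRel (fun a b => A a b ∧ φ a = i ∧ φ b = i)

/-- A digraph is 2-dicolourable if its vertices can be coloured with two colours
so that each colour class induces an acyclic subdigraph. -/
def Dicolourable2 {V : Type} (D : SimpleDigraph V) : Prop :=
  Dicolourable2Rel D.Adj

/-- `(S, A)` describes a subdigraph of `D`: its vertex set is `S` and its arcs
are given by `A`, which must join vertices of `S` and be arcs of `D`. -/
def IsSubdigraphOn {V : Type} (D : SimpleDigraph V) (S : Set V) (A : V → V → Prop) : Prop :=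
  ∀ u v, A u v → u ∈ S ∧ v ∈ S ∧ D.Adj u v

/-- `D` is 3-dicritical: `D` is not 2-dicolourable, but every proper subdigraph of `D`
(one missing a vertex or an arc) is 2-dicolourable. -/
def Dicritical3 {V : Type} (D : SimpleDigraph V) : Prop :=
  ¬ D.Dicolourable2 ∧
    ∀ (S : Set V) (A : V → V → Prop), D.IsSubdigraphOn S A →
      (S ≠ Set.univ ∨ A ≠ D.Adj) → Dicolourable2Rel A

/-- A digraph is semi-complete if any two distinct vertices are joined by at least one arc. -/
def SemiComplete {V : Type} (D : SimpleDigraph V) : Prop :=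
  ∀ u v : V, u ≠ v → D.Adj u v ∨ D.Adj v u

/-- A tournament is a semi-complete digraph with no digon. -/
def IsTournament {V : Type} (D : SimpleDigraph V) : Prop :=
  D.SemiComplete ∧ ∀ u v : V, ¬ (D.Adj u v ∧ D.Adj v u)

/-- Isomorphism of digraphs. -/
def Iso {V W : Type} (D : SimpleDigraph V) (E : SimpleDigraph W) : Prop :=
  ∃ e : V ≃ W, ∀ u v : V, D.Adj u v ↔ E.Adj (e u) (e v)

/-- `D` contains (a copy of) `H` as a subdigraph. -/
def ContainsSub {V W : Type} (D : SimpleDigraph V) (H : SimpleDigraph W) : Prop :=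
  ∃ f : W → V, Function.Injective f ∧ ∀ a b, H.Adj a b → D.Adj (f a) (f b)

/-- `D` contains (a copy of) `H` as an induced subdigraph. -/
def ContainsInduced {V W : Type} (D : SimpleDigraph V) (H : SimpleDigraph W) : Prop :=
  ∃ f : W → V, Function.Injective f ∧ ∀ a b, H.Adj a b ↔ D.Adj (f a) (f b)

end SimpleDigraph

/-- An auxiliary constructor: the digraph on `Fin n` whose arcs are the pairs in `l`. -/
def digraphOfPairs (n : ℕ) (l : List (ℕ × ℕ)) (h : ∀ v : Fin n, (v.val, v.val) ∉ l) :
    SimpleDigraph (Fin n) :=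
  ⟨fun u v => (u.val, v.val) ∈ l, h⟩

/-- The bidirected complete graph `↔K2` on two vertices (a digon). -/
def biK2 : SimpleDigraph (Fin 2) :=
  ⟨fun u v => u ≠ v, fun v h => h rfl⟩

/-- The bidirected complete graph `↔K3` on three vertices. -/
def biK3 : SimpleDigraph (Fin 3) :=
  ⟨fun u v => u ≠ v, fun v h => h rfl⟩

/-- The directed cycle `C3` on three vertices. -/
def dirC3 : SimpleDigraph (Fin 3) :=
  ⟨fun u v => v = u + 1, by decide⟩

/-- The directed wheel `W3`: a directed triangle `0 → 1 → 2 → 0` together with a hub `3`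
joined by a digon to each triangle vertex. -/
def dirW3 : SimpleDigraph (Fin 4) :=
  digraphOfPairs 4 [(3,0),(0,3),(3,1),(1,3),(3,2),(2,3),(0,1),(1,2),(2,0)] (by decide)

/-- The digraph `H5` on vertices `u0, …, u4`: digons between `u0,u1` and between `u0,u4`,
and simple arcs `u4u1, u1u3, u1u2, u3u4, u2u4, u3u0, u0u2, u2u3`. -/
def digraphH5 : SimpleDigraph (Fin 5) :=
  digraphOfPairs 5 [(0,1),(1,0),(0,4),(4,0),(4,1),(1,3),(1,2),(3,4),(2,4),(3,0),(0,2),(2,3)]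
    (by decide)

/-- The Paley tournament `P7` on `ℤ/7ℤ`: an arc from `i` to `j` iff `j - i ∈ {1, 2, 4}`. -/
def dirP7 : SimpleDigraph (Fin 7) :=
  ⟨fun i j => j - i = 1 ∨ j - i = 2 ∨ j - i = 4, by decide⟩

/-- The rotative digraph `R(↔K2, ↔K2)`: digons `{0,1}` and `{2,3}`, all arcs from `{0,1}`
to `{2,3}`, all arcs from `{2,3}` to the extra vertex `4`, all arcs from `4` to `{0,1}`. -/
def rotK2K2 : SimpleDigraph (Fin 5) :=
  digraphOfPairs 5 [(0,1),(1,0),(2,3),(3,2),(0,2),(0,3),(1,2),(1,3),(2,4),(3,4),(4,0),(4,1)]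
    (by decide)

/-- The rotative digraph `R(↔K2, C3)`. -/
def rotK2C3 : SimpleDigraph (Fin 6) :=
  digraphOfPairs 6 [(0,1),(1,0),(2,3),(3,4),(4,2),(0,2),(0,3),(0,4),(1,2),(1,3),(1,4),
    (2,5),(3,5),(4,5),(5,0),(5,1)] (by decide)

/-- The rotative digraph `R(C3, ↔K2)`. -/
def rotC3K2 : SimpleDigraph (Fin 6) :=
  digraphOfPairs 6 [(0,1),(1,2),(2,0),(3,4),(4,3),(0,3),(0,4),(1,3),(1,4),(2,3),(2,4),
    (3,5),(4,5),(5,0),(5,1),(5,2)] (by decide)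

/-- The rotative digraph `R(C3, C3)`. -/
def rotC3C3 : SimpleDigraph (Fin 7) :=
  digraphOfPairs 7 [(0,1),(1,2),(2,0),(3,4),(4,5),(5,3),(0,3),(0,4),(0,5),(1,3),(1,4),(1,5),
    (2,3),(2,4),(2,5),(3,6),(4,6),(5,6),(6,0),(6,1),(6,2)] (by decide)

/-! ### Auxiliary development -/

namespace DicritAux

open Relation SimpleDigraph

attribute [local instance] Classical.propDecidable

variable {V : Type} (D : SimpleDigraph V)

/-- Digon relation. -/
def Dg (u v : V) : Prop := D.Adj u v ∧ D.Adj v u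

/-- Missing (non-adjacent distinct) pair relation. -/
def Ms (u v : V) : Prop := u ≠ v ∧ ¬ D.Adj u v ∧ ¬ D.Adj v u

/-- The arc set of `D` with the arc `x→y` removed. -/
def Del (x y : V) (u v : V) : Prop := D.Adj u v ∧ ¬(u = x ∧ v = y)

/-- `φ` is a valid 2-dicolouring for the arc set `A`. -/
def Ok (A : V → V → Prop) (φ : V → Fin 2) : Prop :=
  ∀ i : Fin 2, AcyclicRel (fun a b => A a b ∧ φ a = i ∧ φ b = i)

variable {D}

lemma dg_symm {u v : V} (h : Dg D u v) : Dg D v u := ⟨h.2, h.1⟩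

lemma dg_ne {u v : V} (h : Dg D u v) : u ≠ v := by
  rintro rfl; exact D.loopless u h.1

lemma ms_symm {u v : V} (h : Ms D u v) : Ms D v u := ⟨h.1.symm, h.2.2, h.2.1⟩

lemma ok_mono {A B : V → V → Prop} {φ : V → Fin 2} (hok : Ok A φ)
    (hBA : ∀ u v, B u v → A u v) : Ok B φ := by
  intro i v hv
  exact hok i v (TransGen.mono (fun a b h => ⟨hBA a b h.1, h.2.1, h.2.2⟩) _ _ hv)

lemma dicol_iff {A : V → V → Prop} : Dicolourable2Rel A ↔ ∃ φ, Ok A φ := Iff.rfl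

/-- A monochromatic intact digon contradicts validity. -/
lemma ok_no_mono_digon {A : V → V → Prop} {φ : V → Fin 2} (hok : Ok A φ)
    {u v : V} (huv : A u v) (hvu : A v u) (hc : φ u = φ v) : False := by
  refine hok (φ u) u (TransGen.head ⟨huv, rfl, hc.symm⟩ (TransGen.single ⟨hvu, hc.symm, rfl⟩))

lemma fin2_eq_of_ne_ne {x y z : Fin 2} (h1 : x ≠ z) (h2 : y ≠ z) : x = y := by
  revert h1 h2; revert x y z; decide

lemma fin2_ne_iff {x y : Fin 2} : x ≠ y ↔ y = x + 1 := by
  revert x y; decide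

lemma fin2_ne_iff' {x y : Fin 2} : x ≠ y ↔ x = y + 1 := by
  revert x y; decide

open Fin.NatCast in
lemma fin2_cast_even {n : ℕ} (h : n % 2 = 0) : ((n : ℕ) : Fin 2) = 0 := by
  obtain ⟨t, rfl⟩ : ∃ t, n = 2 * t := ⟨n / 2, by omega⟩
  push_cast
  simp

/-- Not-2-dicolourable gives, for every colouring, a monochromatic closed walk. -/
lemma exists_cycle (hD : D.Dicritical3) (φ : V → Fin 2) :
    ∃ (i : Fin 2) (v : V), TransGen (fun a b => D.Adj a b ∧ φ a = i ∧ φ b = i) v v := by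
  have h1 : ¬ D.Dicolourable2 := hD.1
  unfold Dicolourable2 Dicolourable2Rel at h1
  push_neg at h1
  obtain ⟨i, hi⟩ := h1 φ
  unfold AcyclicRel at hi
  push_neg at hi
  obtain ⟨v, hv⟩ := hi
  exact ⟨i, v, hv⟩

/-- Deleting one arc yields a valid colouring which must identify the arc's endpoints. -/
lemma del_colour (hD : D.Dicritical3) {x y : V} (hxy : D.Adj x y) :
    ∃ φ : V → Fin 2, Ok (Del D x y) φ ∧ φ x = φ y := by
  have hsub : D.IsSubdigraphOn Set.univ (Del D x y) := by
    intro u v h; exact ⟨trivial, trivial, h.1⟩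
  have hne : Del D x y ≠ D.Adj := by
    intro h
    have : Del D x y x y := h ▸ hxy
    exact this.2 ⟨rfl, rfl⟩
  obtain ⟨φ, hφ⟩ := hD.2 Set.univ (Del D x y) hsub (Or.inr hne)
  refine ⟨φ, hφ, ?_⟩
  by_contra hne2
  obtain ⟨i, v, hv⟩ := exists_cycle hD φ
  refine hφ i v (TransGen.mono ?_ _ _ hv)
  rintro a b ⟨hab, h1, h2⟩
  refine ⟨⟨hab, ?_⟩, h1, h2⟩
  rintro ⟨rfl, rfl⟩
  exact hne2 (h1.trans h2.symm)

/-- Walks in a relation enlarged by a single pair `(a, c)`. -/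
lemma transGen_cases {R : V → V → Prop} {a c x y : V}
    (h : TransGen (fun p q => R p q ∨ (p = a ∧ q = c)) x y) :
    TransGen R x y ∨ (ReflTransGen R x a ∧ ReflTransGen R c y) := by
  induction h with
  | single h =>
    rcases h with h | ⟨rfl, rfl⟩
    · exact Or.inl (TransGen.single h)
    · exact Or.inr ⟨ReflTransGen.refl, ReflTransGen.refl⟩
  | tail _ h ih =>
    rcases h with h | ⟨rfl, rfl⟩
    · rcases ih with ih | ⟨ih1, ih2⟩
      · exact Or.inl (ih.tail h)
      · exact Or.inr ⟨ih1, ih2.tail h⟩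
    · rcases ih with ih | ⟨ih1, _⟩
      · exact Or.inr ⟨ih.to_reflTransGen, ReflTransGen.refl⟩
      · exact Or.inr ⟨ih1, ReflTransGen.refl⟩

end DicritAux
namespace DicritAux

open Relation SimpleDigraph

variable {V : Type} {D : SimpleDigraph V}

/-- Helper for `lp4`: an arc between the two ends of a digon path on 4 vertices is impossible. -/
lemma lp4_aux (hD : D.Dicritical3) {a b c d x y : V} (hxy : D.Adj x y)
    (hx : (x = a ∧ y = d) ∨ (x = d ∧ y = a))
    (hab : Dg D a b) (hbc : Dg D b c) (hcd : Dg D c d)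
    (hac : a ≠ c) (had : a ≠ d) (hbd : b ≠ d) : False := by
  have hab' := dg_ne hab
  have hbc' := dg_ne hbc
  have hcd' := dg_ne hcd
  obtain ⟨φ, hok, hfix⟩ := del_colour hD hxy
  have had2 : φ a = φ d := by
    rcases hx with ⟨rfl, rfl⟩ | ⟨rfl, rfl⟩
    · exact hfix
    · exact hfix.symm
  have hb : φ b ≠ φ a := by
    intro h
    refine ok_no_mono_digon hok (u := b) (v := a) ⟨hab.2, ?_⟩ ⟨hab.1, ?_⟩ h
    · rintro ⟨rfl, rfl⟩
      rcases hx with ⟨h1, h2⟩ | ⟨h1, h2⟩ <;> simp_all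
    · rintro ⟨rfl, rfl⟩
      rcases hx with ⟨h1, h2⟩ | ⟨h1, h2⟩ <;> simp_all
  have hc : φ c ≠ φ a := by
    rw [had2]
    intro h
    refine ok_no_mono_digon hok (u := c) (v := d) ⟨hcd.1, ?_⟩ ⟨hcd.2, ?_⟩ h
    · rintro ⟨rfl, rfl⟩
      rcases hx with ⟨h1, h2⟩ | ⟨h1, h2⟩ <;> simp_all
    · rintro ⟨rfl, rfl⟩
      rcases hx with ⟨h1, h2⟩ | ⟨h1, h2⟩ <;> simp_all
  have hbc2 : φ b = φ c := fin2_eq_of_ne_ne hb hc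
  refine ok_no_mono_digon hok (u := b) (v := c) ⟨hbc.1, ?_⟩ ⟨hbc.2, ?_⟩ hbc2
  · rintro ⟨rfl, rfl⟩
    rcases hx with ⟨h1, h2⟩ | ⟨h1, h2⟩ <;> simp_all
  · rintro ⟨rfl, rfl⟩
    rcases hx with ⟨h1, h2⟩ | ⟨h1, h2⟩ <;> simp_all

/-- The ends of a digon path on 4 distinct vertices are non-adjacent. -/
lemma lp4 (hD : D.Dicritical3) {a b c d : V}
    (hab : Dg D a b) (hbc : Dg D b c) (hcd : Dg D c d)
    (hac : a ≠ c) (had : a ≠ d) (hbd : b ≠ d) : Ms D a d := by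
  refine ⟨had, ?_, ?_⟩
  · intro h; exact lp4_aux hD h (Or.inl ⟨rfl, rfl⟩) hab hbc hcd hac had hbd
  · intro h; exact lp4_aux hD h (Or.inr ⟨rfl, rfl⟩) hab hbc hcd hac had hbd

/-- A hub with digons to the source and middle of a transitive triangle is impossible. -/
lemma trans3 (hD : D.Dicritical3) {h a b c : V}
    (hha : Dg D h a) (hhb : Dg D h b)
    (hhsrc : h ≠ a) (hhsnk : h ≠ c) (hms : b ≠ a) (hmk : b ≠ c)
    (hab : D.Adj a b) (hbc : D.Adj b c) (hac : D.Adj a c) : False := by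
  obtain ⟨φ, hok, hfix⟩ := del_colour hD hac
  have hh : φ h ≠ φ a := by
    intro e
    refine ok_no_mono_digon hok (u := h) (v := a) ⟨hha.1, ?_⟩ ⟨hha.2, ?_⟩ e
    · rintro ⟨h1, -⟩; exact hhsrc h1
    · rintro ⟨-, h2⟩; exact hhsnk h2
  have hbh : φ b ≠ φ h := by
    intro e
    refine ok_no_mono_digon hok (u := b) (v := h) ⟨hhb.2, ?_⟩ ⟨hhb.1, ?_⟩ e
    · rintro ⟨h1, -⟩; exact hms h1
    · rintro ⟨h1, -⟩; exact hhsrc h1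
  have hba : φ b = φ a := fin2_eq_of_ne_ne hbh (Ne.symm hh)
  obtain ⟨j, v, hv⟩ := exists_cycle hD φ
  by_cases hj : j = φ a
  · subst hj
    set R : V → V → Prop := fun p q => Del D a c p q ∧ φ p = φ a ∧ φ q = φ a with hR
    have hmono : TransGen (fun p q => R p q ∨ (p = a ∧ q = c)) v v := by
      refine TransGen.mono ?_ _ _ hv
      rintro p q ⟨hpq, h1, h2⟩
      by_cases hpa : p = a ∧ q = c
      · exact Or.inr hpa
      · exact Or.inl ⟨⟨hpq, hpa⟩, h1, h2⟩
    rcases transGen_cases hmono with hL | ⟨h1, h2⟩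
    · exact hok (φ a) v hL
    · have hca : ReflTransGen R c a := h2.trans h1
      have t1 : TransGen R a c := by
        refine TransGen.head ⟨⟨hab, ?_⟩, rfl, hba⟩ (TransGen.single ⟨⟨hbc, ?_⟩, hba, hfix.symm⟩)
        · rintro ⟨-, h2⟩; exact hmk h2
        · rintro ⟨h1, -⟩; exact hms h1
      exact hok (φ a) a (t1.trans_left hca)
  · refine hok j v (TransGen.mono ?_ _ _ hv)
    rintro p q ⟨hpq, h1, h2⟩
    refine ⟨⟨hpq, ?_⟩, h1, h2⟩
    rintro ⟨rfl, rfl⟩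
    exact hj h1.symm

/-- The arc pattern of `W3` on four given vertices (hub `h`, triangle `a → b → c → a`). -/
def W3pat (h a b c : V) : V → V → Prop := fun u v =>
  (u = h ∧ v = a) ∨ (u = a ∧ v = h) ∨ (u = h ∧ v = b) ∨ (u = b ∧ v = h) ∨
  (u = h ∧ v = c) ∨ (u = c ∧ v = h) ∨ (u = a ∧ v = b) ∨ (u = b ∧ v = c) ∨ (u = c ∧ v = a)

/-- A hub with digons to all vertices of a directed triangle forces `D ≅ W3`. -/
lemma cyc3 (hD : D.Dicritical3) (hW3 : ¬ D.Iso dirW3) {h a b c : V}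
    (hha : Dg D h a) (hhb : Dg D h b) (hhc : Dg D h c)
    (hna : h ≠ a) (hnb : h ≠ b) (hnc : h ≠ c)
    (nab : a ≠ b) (nac : a ≠ c) (nbc : b ≠ c)
    (hab : D.Adj a b) (hbc : D.Adj b c) (hca : D.Adj c a) : False := by
  set S : Set V := {h, a, b, c} with hSdef
  have hsub : D.IsSubdigraphOn S (W3pat h a b c) := by
    rintro u v (⟨rfl, rfl⟩ | ⟨rfl, rfl⟩ | ⟨rfl, rfl⟩ | ⟨rfl, rfl⟩ | ⟨rfl, rfl⟩ | ⟨rfl, rfl⟩ |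
      ⟨rfl, rfl⟩ | ⟨rfl, rfl⟩ | ⟨rfl, rfl⟩)
    · exact ⟨by simp [hSdef], by simp [hSdef], hha.1⟩
    · exact ⟨by simp [hSdef], by simp [hSdef], hha.2⟩
    · exact ⟨by simp [hSdef], by simp [hSdef], hhb.1⟩
    · exact ⟨by simp [hSdef], by simp [hSdef], hhb.2⟩
    · exact ⟨by simp [hSdef], by simp [hSdef], hhc.1⟩
    · exact ⟨by simp [hSdef], by simp [hSdef], hhc.2⟩
    · exact ⟨by simp [hSdef], by simp [hSdef], hab⟩
    · exact ⟨by simp [hSdef], by simp [hSdef], hbc⟩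
    · exact ⟨by simp [hSdef], by simp [hSdef], hca⟩
  have hnotcol : ¬ Dicolourable2Rel (W3pat h a b c) := by
    rintro ⟨ψ, hψ⟩
    have hψ' : Ok (W3pat h a b c) ψ := hψ
    by_cases e1 : ψ a = ψ h
    · exact ok_no_mono_digon hψ' (u := h) (v := a) (Or.inl ⟨rfl, rfl⟩)
        (Or.inr (Or.inl ⟨rfl, rfl⟩)) e1.symm
    by_cases e2 : ψ b = ψ h
    · exact ok_no_mono_digon hψ' (u := h) (v := b)
        (Or.inr (Or.inr (Or.inl ⟨rfl, rfl⟩)))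
        (Or.inr (Or.inr (Or.inr (Or.inl ⟨rfl, rfl⟩)))) e2.symm
    by_cases e3 : ψ c = ψ h
    · exact ok_no_mono_digon hψ' (u := h) (v := c)
        (Or.inr (Or.inr (Or.inr (Or.inr (Or.inl ⟨rfl, rfl⟩)))))
        (Or.inr (Or.inr (Or.inr (Or.inr (Or.inr (Or.inl ⟨rfl, rfl⟩)))))) e3.symm
    have eab : ψ a = ψ b := fin2_eq_of_ne_ne e1 e2
    have eac : ψ a = ψ c := fin2_eq_of_ne_ne e1 e3
    refine hψ' (ψ a) a ?_
    refine TransGen.head ⟨?_, rfl, eab.symm⟩ (TransGen.head ⟨?_, eab.symm, eac.symm⟩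
      (TransGen.single ⟨?_, eac.symm, rfl⟩))
    · exact Or.inr (Or.inr (Or.inr (Or.inr (Or.inr (Or.inr (Or.inl ⟨rfl, rfl⟩))))))
    · exact Or.inr (Or.inr (Or.inr (Or.inr (Or.inr (Or.inr (Or.inr (Or.inl ⟨rfl, rfl⟩)))))))
    · exact Or.inr (Or.inr (Or.inr (Or.inr (Or.inr (Or.inr (Or.inr (Or.inr ⟨rfl, rfl⟩)))))))
  have hkey : ¬ (S ≠ Set.univ ∨ W3pat h a b c ≠ D.Adj) := by
    intro hor
    exact hnotcol (hD.2 S (W3pat h a b c) hsub hor)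
  push_neg at hkey
  obtain ⟨hS, hA⟩ := hkey
  have hginj : Function.Injective (![a, b, c, h] : Fin 4 → V) := by
    intro i j hij
    fin_cases i <;> fin_cases j <;> simp_all
  have hgsurj : Function.Surjective (![a, b, c, h] : Fin 4 → V) := by
    intro v
    have hv : v ∈ S := by rw [hS]; trivial
    rcases hv with rfl | rfl | rfl | rfl
    · exact ⟨3, rfl⟩
    · exact ⟨0, rfl⟩
    · exact ⟨1, rfl⟩
    · exact ⟨2, rfl⟩
  set E := Equiv.ofBijective (![a, b, c, h] : Fin 4 → V) ⟨hginj, hgsurj⟩ with hE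
  refine hW3 ⟨E.symm, ?_⟩
  have key : ∀ i j : Fin 4, D.Adj (![a, b, c, h] i) (![a, b, c, h] j) ↔ dirW3.Adj i j := by
    rw [← hA]
    intro i j
    fin_cases i <;> fin_cases j <;>
      simp [W3pat, dirW3, digraphOfPairs, nab, nac, nbc, hna, hnb, hnc,
        nab.symm, nac.symm, nbc.symm, hna.symm, hnb.symm, hnc.symm] <;> decide
  intro u v
  have hu : (![a, b, c, h] : Fin 4 → V) (E.symm u) = u := E.apply_symm_apply u
  have hv : (![a, b, c, h] : Fin 4 → V) (E.symm v) = v := E.apply_symm_apply v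
  rw [← hu, ← hv, key (E.symm u) (E.symm v), hu, hv]

/-- The K1,3 rule: among any three digon-neighbours of a hub, some pair is missing. -/
lemma lk13 (hD : D.Dicritical3) (hW3 : ¬ D.Iso dirW3) {h a b c : V}
    (hha : Dg D h a) (hhb : Dg D h b) (hhc : Dg D h c)
    (nab : a ≠ b) (nac : a ≠ c) (nbc : b ≠ c)
    (dab : ¬ Dg D a b) (dac : ¬ Dg D a c) (dbc : ¬ Dg D b c) :
    Ms D a b ∨ Ms D a c ∨ Ms D b c := by
  have hna : h ≠ a := dg_ne hha
  have hnb : h ≠ b := dg_ne hhb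
  have hnc : h ≠ c := dg_ne hhc
  by_contra hcon
  push_neg at hcon
  obtain ⟨m1, m2, m3⟩ := hcon
  have p1 : D.Adj a b ∨ D.Adj b a := by
    by_contra hp; push_neg at hp; exact m1 ⟨nab, hp.1, hp.2⟩
  have p2 : D.Adj b c ∨ D.Adj c b := by
    by_contra hp; push_neg at hp; exact m3 ⟨nbc, hp.1, hp.2⟩
  have p3 : D.Adj a c ∨ D.Adj c a := by
    by_contra hp; push_neg at hp; exact m2 ⟨nac, hp.1, hp.2⟩
  rcases p1 with q1 | q1 <;> rcases p2 with q2 | q2 <;> rcases p3 with q3 | q3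
  · -- a→b, b→c, a→c : transitive a b c
    exact trans3 hD hha hhb hna hnc nab.symm nbc q1 q2 q3
  · -- a→b, b→c, c→a : directed triangle
    exact cyc3 hD hW3 hha hhb hhc hna hnb hnc nab nac nbc q1 q2 q3
  · -- a→b, c→b, a→c : transitive a c b
    exact trans3 hD hha hhc hna hnb nac.symm nbc.symm q3 q2 q1
  · -- a→b, c→b, c→a : transitive c a b
    exact trans3 hD hhc hha hnc hnb nac nab q3 q1 q2
  · -- b→a, b→c, a→c : transitive b a c
    exact trans3 hD hhb hha hnb hnc nab nac q1 q3 q2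
  · -- b→a, b→c, c→a : transitive b c a
    exact trans3 hD hhb hhc hnb hna nbc.symm nac.symm q2 q3 q1
  · -- b→a, c→b, a→c : directed triangle a c b
    exact cyc3 hD hW3 hha hhc hhb hna hnc hnb nac nab nbc.symm q3 q2 q1
  · -- b→a, c→b, c→a : transitive c b a
    exact trans3 hD hhc hhb hnc hna nbc nab.symm q2 q1 q3

end DicritAux
namespace DicritAux

open Relation SimpleDigraph

variable {V : Type} {D : SimpleDigraph V}

/-- A digon cycle: `k ≥ 3` distinct vertices joined cyclically by digons. -/
def IsDgCycle (D : SimpleDigraph V) (k : ℕ) (u : ℕ → V) : Prop :=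
  3 ≤ k ∧ (∀ i, i < k → ∀ j, j < k → u i = u j → i = j) ∧
  (∀ i, i + 1 < k → Dg D (u i) (u (i + 1))) ∧ Dg D (u (k - 1)) (u 0)

open Fin.NatCast in
lemma alternate {φ : V → Fin 2} {u : ℕ → V} {k s : ℕ}
    (h : ∀ i, s ≤ i → i + 1 < k → φ (u (i + 1)) ≠ φ (u i)) :
    ∀ i, s ≤ i → i < k → φ (u i) = φ (u s) + ((i - s : ℕ) : Fin 2) := by
  intro i
  induction i with
  | zero =>
    intro hsi _
    interval_cases s
    simp
  | succ n ih =>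
    intro hsi hik
    rcases Nat.lt_or_ge n s with hn | hn
    · have : s = n + 1 := by omega
      subst this
      simp
    · have hne := h n hn hik
      rw [fin2_ne_iff'] at hne
      rw [hne, ih hn (by omega)]
      have : n + 1 - s = (n - s) + 1 := by omega
      rw [this]
      push_cast
      abel

open Fin.NatCast in
/-- There is no even digon cycle. -/
lemma no_even_cycle (hD : D.Dicritical3) {k : ℕ} {u : ℕ → V}
    (hc : IsDgCycle D k u) (hk : k % 2 = 0) : False := by
  obtain ⟨hk3, hinj, hchain, hclose⟩ := hc
  have h01 : Dg D (u 0) (u 1) := hchain 0 (by omega)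
  obtain ⟨φ, hok, hfix⟩ := del_colour hD h01.1
  have hforce : ∀ i, 1 ≤ i → i + 1 < k → φ (u (i + 1)) ≠ φ (u i) := by
    intro i hi hik he
    have hd := hchain i hik
    refine ok_no_mono_digon hok (u := u i) (v := u (i + 1)) ⟨hd.1, ?_⟩ ⟨hd.2, ?_⟩ he.symm
    · rintro ⟨h1, -⟩
      exact absurd (hinj i (by omega) 0 (by omega) h1) (by omega)
    · rintro ⟨h1, -⟩
      exact absurd (hinj (i + 1) (by omega) 0 (by omega) h1) (by omega)
  have halt := alternate hforce (k - 1) (by omega) (by omega)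
  have hcast : ((k - 1 - 1 : ℕ) : Fin 2) = 0 := fin2_cast_even (by omega)
  rw [hcast, add_zero] at halt
  have : φ (u (k - 1)) ≠ φ (u 0) := by
    intro he
    refine ok_no_mono_digon hok (u := u (k - 1)) (v := u 0) ⟨hclose.1, ?_⟩ ⟨hclose.2, ?_⟩ he
    · rintro ⟨h1, -⟩
      exact absurd (hinj (k - 1) (by omega) 0 (by omega) h1) (by omega)
    · rintro ⟨-, h2⟩
      exact absurd (hinj (k - 1) (by omega) 1 (by omega) h2) (by omega)
  rw [halt, hfix] at this
  exact this rfl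

/-- The (bidirected) arc relation of a digon cycle. -/
def CycRel (u : ℕ → V) (k : ℕ) : V → V → Prop := fun p q =>
  (∃ i, i + 1 < k ∧ ((p = u i ∧ q = u (i + 1)) ∨ (q = u i ∧ p = u (i + 1)))) ∨
  ((p = u (k - 1) ∧ q = u 0) ∨ (q = u (k - 1) ∧ p = u 0))

/-- An odd digon cycle forces `D` to be exactly the bidirected cycle. -/
lemma odd_cycle_eq (hD : D.Dicritical3) {k : ℕ} {u : ℕ → V}
    (hc : IsDgCycle D k u) (hk : k % 2 = 1) :
    (∀ v : V, ∃ i, i < k ∧ v = u i) ∧ CycRel u k = D.Adj := by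
  obtain ⟨hk3, hinj, hchain, hclose⟩ := hc
  set S : Set V := {v | ∃ i, i < k ∧ v = u i} with hSdef
  have hsub : D.IsSubdigraphOn S (CycRel u k) := by
    rintro p q (⟨i, hi, ⟨rfl, rfl⟩ | ⟨rfl, rfl⟩⟩ | ⟨rfl, rfl⟩ | ⟨rfl, rfl⟩)
    · exact ⟨⟨i, by omega, rfl⟩, ⟨i + 1, by omega, rfl⟩, (hchain i hi).1⟩
    · exact ⟨⟨i + 1, by omega, rfl⟩, ⟨i, by omega, rfl⟩, (hchain i hi).2⟩
    · exact ⟨⟨k - 1, by omega, rfl⟩, ⟨0, by omega, rfl⟩, hclose.1⟩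
    · exact ⟨⟨0, by omega, rfl⟩, ⟨k - 1, by omega, rfl⟩, hclose.2⟩
  have hnotcol : ¬ Dicolourable2Rel (CycRel u k) := by
    rintro ⟨ψ, hψ⟩
    have hψ' : Ok (CycRel u k) ψ := hψ
    have hsame : (∃ i, i + 1 < k ∧ ψ (u (i + 1)) = ψ (u i)) ∨ ψ (u (k - 1)) = ψ (u 0) := by
      by_contra hno
      push_neg at hno
      obtain ⟨hno1, hno2⟩ := hno
      have halt := alternate (fun i _ hik => hno1 i hik) (s := 0) (k - 1) (by omega) (by omega)
      rw [fin2_cast_even (n := k - 1 - 0) (by omega), add_zero] at halt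
      exact hno2 halt
    rcases hsame with ⟨i, hi, he⟩ | he
    · exact ok_no_mono_digon hψ' (u := u i) (v := u (i + 1))
        (Or.inl ⟨i, hi, Or.inl ⟨rfl, rfl⟩⟩) (Or.inl ⟨i, hi, Or.inr ⟨rfl, rfl⟩⟩) he.symm
    · exact ok_no_mono_digon hψ' (u := u (k - 1)) (v := u 0)
        (Or.inr (Or.inl ⟨rfl, rfl⟩)) (Or.inr (Or.inr ⟨rfl, rfl⟩)) he
  have hkey : ¬ (S ≠ Set.univ ∨ CycRel u k ≠ D.Adj) := by
    intro hor
    exact hnotcol (hD.2 S (CycRel u k) hsub hor)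
  push_neg at hkey
  obtain ⟨hS, hA⟩ := hkey
  refine ⟨fun v => ?_, hA⟩
  have : v ∈ S := by rw [hS]; trivial
  exact this

lemma final_cast {m n : ℕ} (h : 6 * m ≤ 3 * n * n + n) :
    (m : ℚ) ≤ (n.choose 2 : ℚ) + (2 / 3 : ℚ) * (n : ℚ) := by
  rw [Nat.cast_choose_two]
  have h2 : ((6 * m : ℕ) : ℚ) ≤ ((3 * n * n + n : ℕ) : ℚ) := Nat.cast_le.2 h
  push_cast at h2
  linarith

end DicritAux
namespace DicritAux

open Relation SimpleDigraph

variable {V : Type} {D : SimpleDigraph V}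

/-- A digon triangle covering everything makes `D ≅ ↔K3`. -/
lemma cyc3_biK3 {u : ℕ → V} (hc : IsDgCycle D 3 u)
    (hall : ∀ v : V, ∃ i, i < 3 ∧ v = u i) (hA : CycRel u 3 = D.Adj) : D.Iso biK3 := by
  obtain ⟨-, hinj, -, -⟩ := hc
  have nab : u 0 ≠ u 1 := fun h => absurd (hinj 0 (by omega) 1 (by omega) h) (by omega)
  have nac : u 0 ≠ u 2 := fun h => absurd (hinj 0 (by omega) 2 (by omega) h) (by omega)
  have nbc : u 1 ≠ u 2 := fun h => absurd (hinj 1 (by omega) 2 (by omega) h) (by omega)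
  have hA' : ∀ p q, D.Adj p q ↔
      ((p = u 0 ∧ q = u 1) ∨ (q = u 0 ∧ p = u 1) ∨ (p = u 1 ∧ q = u 2) ∨
       (q = u 1 ∧ p = u 2) ∨ (p = u 2 ∧ q = u 0) ∨ (q = u 2 ∧ p = u 0)) := by
    intro p q
    rw [← hA]
    constructor
    · rintro (⟨i, hi, h⟩ | h)
      · have hi2 : i < 2 := by omega
        interval_cases i <;> tauto
      · have h2 : (3 - 1 : ℕ) = 2 := by norm_num
        rw [h2] at h
        tauto
    · have h2 : (3 - 1 : ℕ) = 2 := by norm_num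
      rintro (⟨rfl, rfl⟩ | ⟨rfl, rfl⟩ | ⟨rfl, rfl⟩ | ⟨rfl, rfl⟩ | ⟨rfl, rfl⟩ | ⟨rfl, rfl⟩)
      · exact Or.inl ⟨0, by omega, Or.inl ⟨rfl, rfl⟩⟩
      · exact Or.inl ⟨0, by omega, Or.inr ⟨rfl, rfl⟩⟩
      · exact Or.inl ⟨1, by omega, Or.inl ⟨rfl, rfl⟩⟩
      · exact Or.inl ⟨1, by omega, Or.inr ⟨rfl, rfl⟩⟩
      · exact Or.inr (Or.inl ⟨by rw [h2], rfl⟩)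
      · exact Or.inr (Or.inr ⟨by rw [h2], rfl⟩)
  have hginj : Function.Injective (![u 0, u 1, u 2] : Fin 3 → V) := by
    intro i j hij
    fin_cases i <;> fin_cases j <;> simp_all [nab, nac, nbc, nab.symm, nac.symm, nbc.symm]
  have hgsurj : Function.Surjective (![u 0, u 1, u 2] : Fin 3 → V) := by
    intro v
    obtain ⟨i, hi, rfl⟩ := hall v
    interval_cases i
    · exact ⟨0, rfl⟩
    · exact ⟨1, rfl⟩
    · exact ⟨2, rfl⟩
  set E := Equiv.ofBijective (![u 0, u 1, u 2] : Fin 3 → V) ⟨hginj, hgsurj⟩ with hE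
  refine ⟨E.symm, ?_⟩
  have key : ∀ i j : Fin 3, D.Adj (![u 0, u 1, u 2] i) (![u 0, u 1, u 2] j) ↔ biK3.Adj i j := by
    intro i j
    fin_cases i <;> fin_cases j <;>
      simp [hA', biK3, nab, nac, nbc, nab.symm, nac.symm, nbc.symm] <;> decide
  intro p q
  have hu : (![u 0, u 1, u 2] : Fin 3 → V) (E.symm p) = p := E.apply_symm_apply p
  have hv : (![u 0, u 1, u 2] : Fin 3 → V) (E.symm q) = q := E.apply_symm_apply q
  rw [← hu, ← hv, key (E.symm p) (E.symm q), hu, hv]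

/-- A bidirected cycle has at most `2n` arcs. -/
lemma cyc_card_le [Fintype V] {k : ℕ} {u : ℕ → V} (hc : IsDgCycle D k u)
    (hA : CycRel u k = D.Adj) :
    Nat.card {p : V × V // D.Adj p.1 p.2} ≤ 2 * Fintype.card V := by
  classical
  obtain ⟨hk3, hinj, -, -⟩ := hc
  set Fwd : V → V → Prop := fun p q =>
    (∃ i, i + 1 < k ∧ p = u i ∧ q = u (i + 1)) ∨ (p = u (k - 1) ∧ q = u 0) with hF
  set Bwd : V → V → Prop := fun p q =>
    (∃ i, i + 1 < k ∧ q = u i ∧ p = u (i + 1)) ∨ (q = u (k - 1) ∧ p = u 0) with hB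
  have hFu : ∀ p q1 q2, Fwd p q1 → Fwd p q2 → q1 = q2 := by
    rintro p q1 q2 (⟨i, hi, rfl, rfl⟩ | ⟨rfl, rfl⟩) (⟨j, hj, hp, rfl⟩ | ⟨hp, rfl⟩)
    · have := hinj i (by omega) j (by omega) hp
      subst this; rfl
    · have := hinj i (by omega) (k - 1) (by omega) hp
      omega
    · have := hinj (k - 1) (by omega) j (by omega) hp
      omega
    · rfl
  have hBu : ∀ p q1 q2, Bwd p q1 → Bwd p q2 → q1 = q2 := by
    rintro p q1 q2 (⟨i, hi, rfl, rfl⟩ | ⟨rfl, rfl⟩) (⟨j, hj, rfl, hp⟩ | ⟨rfl, hp⟩)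
    · have := hinj (i + 1) (by omega) (j + 1) (by omega) hp
      have : i = j := by omega
      subst this; rfl
    · have := hinj (i + 1) (by omega) 0 (by omega) hp
      omega
    · have := hinj (j + 1) (by omega) 0 (by omega) hp.symm
      omega
    · rfl
  have hFB : ∀ p q, D.Adj p q → Fwd p q ∨ Bwd p q := by
    intro p q hpq
    rw [← hA] at hpq
    rcases hpq with ⟨i, hi, ⟨rfl, rfl⟩ | ⟨rfl, rfl⟩⟩ | ⟨rfl, rfl⟩ | ⟨rfl, rfl⟩
    · exact Or.inl (Or.inl ⟨i, hi, rfl, rfl⟩)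
    · exact Or.inr (Or.inl ⟨i, hi, rfl, rfl⟩)
    · exact Or.inl (Or.inr ⟨rfl, rfl⟩)
    · exact Or.inr (Or.inr ⟨rfl, rfl⟩)
  set g : {p : V × V // D.Adj p.1 p.2} → V × Bool :=
    fun p => (p.1.1, if Fwd p.1.1 p.1.2 then true else false) with hg
  have hginj : Function.Injective g := by
    rintro ⟨⟨p1, q1⟩, h1⟩ ⟨⟨p2, q2⟩, h2⟩ heq
    simp only [hg, Prod.mk.injEq] at heq
    obtain ⟨rfl, hbit⟩ := heq
    have : q1 = q2 := by
      by_cases hf1 : Fwd p1 q1 <;> by_cases hf2 : Fwd p1 q2 <;> simp [hf1, hf2] at hbit ⊢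
      · exact hFu _ _ _ hf1 hf2
      · rcases hFB p1 q1 h1 with h | h
        · exact absurd h hf1
        · rcases hFB p1 q2 h2 with h' | h'
          · exact absurd h' hf2
          · exact hBu _ _ _ h h'
    subst this
    rfl
  have := Nat.card_le_card_of_injective g hginj
  simpa [Nat.card_eq_fintype_card, mul_comm] using this

end DicritAux
namespace DicritAux

open Relation SimpleDigraph

variable {V : Type} {D : SimpleDigraph V}

/-- Ordered digon pairs inside `S`. -/
noncomputable def ordDig (D : SimpleDigraph V) (S : Finset V) : Finset (V × V) :=
  @Finset.filter _ (fun p => Dg D p.1 p.2) (fun _ => Classical.propDecidable _) (S ×ˢ S)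

/-- Ordered missing pairs inside `S`. -/
noncomputable def ordMis (D : SimpleDigraph V) (S : Finset V) : Finset (V × V) :=
  @Finset.filter _ (fun p => Ms D p.1 p.2) (fun _ => Classical.propDecidable _) (S ×ˢ S)

lemma mem_ordDig {S : Finset V} {p : V × V} :
    p ∈ ordDig D S ↔ p.1 ∈ S ∧ p.2 ∈ S ∧ Dg D p.1 p.2 := by
  simp only [ordDig, Finset.mem_filter, Finset.mem_product]
  tauto

lemma mem_ordMis {S : Finset V} {p : V × V} :
    p ∈ ordMis D S ↔ p.1 ∈ S ∧ p.2 ∈ S ∧ Ms D p.1 p.2 := by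
  simp only [ordMis, Finset.mem_filter, Finset.mem_product]
  tauto

/-- A digon path inside `S`: `m` distinct vertices joined consecutively by digons. -/
def IsPath (D : SimpleDigraph V) (S : Finset V) (m : ℕ) (x : ℕ → V) : Prop :=
  (∀ i, i < m → x i ∈ S) ∧ (∀ i, i < m → ∀ j, j < m → x i = x j → i = j) ∧
  (∀ i, i + 1 < m → Dg D (x i) (x (i + 1)))

lemma path_card_le {S : Finset V} {m : ℕ} {x : ℕ → V} (h : IsPath D S m x) :
    m ≤ S.card := by
  classical
  have := Finset.card_le_card_of_injOn x (fun a ha => h.1 a (Finset.mem_range.1 ha))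
    (fun a ha b hb hab => h.2.1 a (Finset.mem_range.1 ha) b (Finset.mem_range.1 hb) hab)
  simpa using this

/-- Digon-count surgery when removing a vertex `v` whose unique digon-neighbour in `S` is `w`. -/
lemma ordDig_erase [DecidableEq V] {S : Finset V} {v w : V} (hv : v ∈ S) (hw : w ∈ S)
    (hnb : ∀ z ∈ S, Dg D z v → z = w) (hdvw : Dg D v w) :
    (ordDig D S).card = (ordDig D (S.erase v)).card + 2 := by
  classical
  have hvw : v ≠ w := dg_ne hdvw
  have hset : ordDig D S = insert (v, w) (insert (w, v) (ordDig D (S.erase v))) := by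
    ext ⟨p, q⟩
    simp only [mem_ordDig, Finset.mem_insert, Prod.mk.injEq, Finset.mem_erase]
    constructor
    · rintro ⟨hp, hq, hd⟩
      by_cases hpv : p = v
      · subst hpv
        have := hnb q hq (dg_symm hd)
        exact Or.inl ⟨rfl, this⟩
      · by_cases hqv : q = v
        · subst hqv
          have := hnb p hp hd
          exact Or.inr (Or.inl ⟨this, rfl⟩)
        · exact Or.inr (Or.inr ⟨⟨hpv, hp⟩, ⟨hqv, hq⟩, hd⟩)
    · rintro (⟨rfl, rfl⟩ | ⟨rfl, rfl⟩ | ⟨⟨-, hp⟩, ⟨-, hq⟩, hd⟩)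
      · exact ⟨hv, hw, hdvw⟩
      · exact ⟨hw, hv, dg_symm hdvw⟩
      · exact ⟨hp, hq, hd⟩
  have hn2 : (w, v) ∉ ordDig D (S.erase v) := by
    simp only [mem_ordDig, Finset.mem_erase]
    rintro ⟨-, ⟨h1, -⟩, -⟩
    exact h1 rfl
  have hn1 : (v, w) ∉ insert (w, v) (ordDig D (S.erase v)) := by
    simp only [Finset.mem_insert, Prod.mk.injEq, mem_ordDig, Finset.mem_erase]
    rintro (⟨h1, -⟩ | ⟨⟨h1, -⟩, -, -⟩)
    · exact hvw h1
    · exact h1 rfl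
  rw [hset, Finset.card_insert_of_notMem hn1, Finset.card_insert_of_notMem hn2]

/-- Missing-count surgery: re-inserting a vertex `v` with a missing pair `{v, w}`. -/
lemma ordMis_insert2 [DecidableEq V] {S : Finset V} {v w : V} (hv : v ∈ S) (hw : w ∈ S) (hvw : Ms D v w) :
    (ordMis D (S.erase v)).card + 2 ≤ (ordMis D S).card := by
  classical
  have hne : v ≠ w := hvw.1
  have hsub : insert (v, w) (insert (w, v) (ordMis D (S.erase v))) ⊆ ordMis D S := by
    intro p hp
    simp only [Finset.mem_insert] at hp
    rcases hp with rfl | rfl | hp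
    · exact mem_ordMis.2 ⟨hv, hw, hvw⟩
    · exact mem_ordMis.2 ⟨hw, hv, ms_symm hvw⟩
    · rw [mem_ordMis] at hp ⊢
      exact ⟨Finset.mem_of_mem_erase hp.1, Finset.mem_of_mem_erase hp.2.1, hp.2.2⟩
  have hn2 : (w, v) ∉ ordMis D (S.erase v) := by
    simp only [mem_ordMis, Finset.mem_erase]
    rintro ⟨-, ⟨h1, -⟩, -⟩
    exact h1 rfl
  have hn1 : (v, w) ∉ insert (w, v) (ordMis D (S.erase v)) := by
    simp only [Finset.mem_insert, Prod.mk.injEq, mem_ordMis, Finset.mem_erase]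
    rintro (⟨h1, -⟩ | ⟨⟨h1, -⟩, -, -⟩)
    · exact hne h1
    · exact h1 rfl
  have hcard := Finset.card_le_card hsub
  rw [Finset.card_insert_of_notMem hn1, Finset.card_insert_of_notMem hn2] at hcard
  omega

end DicritAux
namespace DicritAux

open Relation SimpleDigraph

variable {V : Type} {D : SimpleDigraph V}

/-- Digon-count surgery when removing a whole star (hub `x1` with digon-neighbourhood `N`). -/
lemma ordDig_star [DecidableEq V] {S : Finset V} {x1 : V} (hx1 : x1 ∈ S)
    {N : Finset V} (hN : ∀ z, z ∈ N ↔ z ∈ S ∧ Dg D x1 z)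
    (hb : ∀ z ∈ N, ∀ w ∈ S, Dg D z w → w = x1) :
    (ordDig D S).card = (ordDig D (S \ insert x1 N)).card + 2 * N.card := by
  classical
  have hx1N : x1 ∉ N := fun h => dg_ne ((hN x1).1 h).2 rfl
  set R : Finset V := insert x1 N with hR
  set A : Finset (V × V) := N.image (fun z => (x1, z)) with hA
  set B : Finset (V × V) := N.image (fun z => (z, x1)) with hB
  have hset : ordDig D S = (ordDig D (S \ R)) ∪ A ∪ B := by
    ext ⟨p, q⟩
    simp only [Finset.mem_union, mem_ordDig, Finset.mem_sdiff, hA, hB,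
      Finset.mem_image, Prod.mk.injEq]
    constructor
    · rintro ⟨hp, hq, hd⟩
      by_cases hpx : p = x1
      · subst hpx
        exact Or.inl (Or.inr ⟨q, (hN q).2 ⟨hq, hd⟩, rfl, rfl⟩)
      · by_cases hpN : p ∈ N
        · have := hb p hpN q hq hd
          exact Or.inr ⟨p, hpN, rfl, this.symm ▸ rfl⟩
        · -- p ∉ R; show q ∉ R as well
          have hqx : q ≠ x1 := by
            rintro rfl
            exact hpN ((hN p).2 ⟨hp, dg_symm hd⟩)
          have hqN : q ∉ N := by
            intro hqN
            exact hpx (hb q hqN p hp (dg_symm hd))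
          refine Or.inl (Or.inl ⟨⟨hp, ?_⟩, ⟨hq, ?_⟩, hd⟩) <;>
            simp [hR, Finset.mem_insert]
          · exact ⟨hpx, hpN⟩
          · exact ⟨hqx, hqN⟩
    · rintro (((⟨⟨hp, -⟩, ⟨hq, -⟩, hd⟩) | ⟨z, hz, rfl, rfl⟩) | ⟨z, hz, rfl, rfl⟩)
      · exact ⟨hp, hq, hd⟩
      · exact ⟨hx1, ((hN z).1 hz).1, ((hN z).1 hz).2⟩
      · exact ⟨((hN z).1 hz).1, hx1, dg_symm ((hN z).1 hz).2⟩
  have hAcard : A.card = N.card := Finset.card_image_of_injective _ (by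
    intro a b hab
    simp only [Prod.mk.injEq] at hab
    exact hab.2)
  have hBcard : B.card = N.card := Finset.card_image_of_injective _ (by
    intro a b hab
    simp only [Prod.mk.injEq] at hab
    exact hab.1)
  have hdAB : Disjoint A B := by
    rw [Finset.disjoint_left]
    rintro ⟨p, q⟩ hpA hpB
    simp only [hA, hB, Finset.mem_image, Prod.mk.injEq] at hpA hpB
    obtain ⟨z, hz, rfl, rfl⟩ := hpA
    obtain ⟨z', hz', hz'2, -⟩ := hpB
    exact hx1N (hz'2 ▸ hz')
  have hdSA : Disjoint (ordDig D (S \ R)) A := by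
    rw [Finset.disjoint_left]
    rintro ⟨p, q⟩ hpS hpA
    simp only [hA, Finset.mem_image, Prod.mk.injEq] at hpA
    obtain ⟨z, hz, rfl, rfl⟩ := hpA
    have := (mem_ordDig.1 hpS).1
    rw [Finset.mem_sdiff] at this
    exact this.2 (Finset.mem_insert_self x1 N)
  have hdSB : Disjoint (ordDig D (S \ R)) B := by
    rw [Finset.disjoint_left]
    rintro ⟨p, q⟩ hpS hpB
    simp only [hB, Finset.mem_image, Prod.mk.injEq] at hpB
    obtain ⟨z, hz, rfl, rfl⟩ := hpB
    have := (mem_ordDig.1 hpS).1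
    rw [Finset.mem_sdiff] at this
    exact this.2 (Finset.mem_insert_of_mem hz)
  rw [hset, Finset.card_union_of_disjoint, Finset.card_union_of_disjoint hdSA]
  · omega
  · rw [Finset.disjoint_union_left]
    exact ⟨hdSB, hdAB⟩

/-- Triangle-free–type counting: if among any three elements of `N` some pair is missing,
then there are at least `2(|N| - 2)` ordered missing pairs within `N`. -/
lemma mantel_like [DecidableEq V] {N : Finset V}
    (hrule : ∀ z1 ∈ N, ∀ z2 ∈ N, ∀ z3 ∈ N, z1 ≠ z2 → z1 ≠ z3 → z2 ≠ z3 →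
      Ms D z1 z2 ∨ Ms D z1 z3 ∨ Ms D z2 z3) :
    2 * (N.card - 2) ≤ ((ordMis D N)).card := by
  classical
  by_cases hadj : ∃ p ∈ N, ∃ q ∈ N, p ≠ q ∧ ¬ Ms D p q
  · obtain ⟨p, hp, q, hq, hpq, hnm⟩ := hadj
    set K := N \ {p, q} with hK
    have hKcard : K.card = N.card - 2 := by
      rw [hK, Finset.card_sdiff_of_subset]
      · congr 1
        rw [Finset.card_insert_of_notMem (by simp [hpq]), Finset.card_singleton]
      · intro z hz
        simp only [Finset.mem_insert, Finset.mem_singleton] at hz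
        rcases hz with rfl | rfl
        · exact hp
        · exact hq
    have hKmis : ∀ z ∈ K, Ms D p z ∨ Ms D q z := by
      intro z hz
      rw [hK, Finset.mem_sdiff] at hz
      simp only [Finset.mem_insert, Finset.mem_singleton] at hz
      have h1 : p ≠ z := fun h => hz.2 (Or.inl h.symm)
      have h2 : q ≠ z := fun h => hz.2 (Or.inr h.symm)
      rcases hrule p hp q hq z hz.1 hpq h1 h2 with h | h | h
      · exact absurd h hnm
      · exact Or.inl h
      · exact Or.inr h
    set f : V → V × V := fun z => if Ms D p z then (p, z) else (q, z) with hf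
    set A := K.image f with hA2
    set B := K.image (Prod.swap ∘ f) with hB2
    have hfsnd : ∀ z, (f z).2 = z := by
      intro z
      rw [hf]
      by_cases h : Ms D p z <;> simp [h]
    have hffst : ∀ z ∈ K, (f z).1 = p ∨ (f z).1 = q := by
      intro z hz
      rw [hf]
      by_cases h : Ms D p z <;> simp [h]
    have hfmis : ∀ z ∈ K, Ms D (f z).1 (f z).2 := by
      intro z hz
      rw [hf]
      by_cases h : Ms D p z
      · simpa [h] using h
      · rcases hKmis z hz with h' | h'
        · exact absurd h' h
        · simpa [h] using h'
    have hfmem : ∀ z ∈ K, (f z).1 ∈ N ∧ (f z).2 ∈ N := by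
      intro z hz
      constructor
      · rcases hffst z hz with h | h <;> rw [h]
        · exact hp
        · exact hq
      · rw [hfsnd]
        exact (Finset.mem_sdiff.1 hz).1
    have hAsub : A ⊆ ordMis D N := by
      intro a ha
      rw [hA2, Finset.mem_image] at ha
      obtain ⟨z, hz, rfl⟩ := ha
      exact mem_ordMis.2 ⟨(hfmem z hz).1, (hfmem z hz).2, hfmis z hz⟩
    have hBsub : B ⊆ ordMis D N := by
      intro a ha
      rw [hB2, Finset.mem_image] at ha
      obtain ⟨z, hz, rfl⟩ := ha
      exact mem_ordMis.2 ⟨(hfmem z hz).2, (hfmem z hz).1, ms_symm (hfmis z hz)⟩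
    have hAcard : A.card = K.card := by
      rw [hA2]
      apply Finset.card_image_of_injOn
      intro a ha b hb hab
      have := congrArg Prod.snd hab
      rwa [hfsnd, hfsnd] at this
    have hBcard : B.card = K.card := by
      rw [hB2]
      apply Finset.card_image_of_injOn
      intro a ha b hb hab
      have := congrArg Prod.fst hab
      simp only [Function.comp_apply, Prod.fst_swap] at this
      rwa [hfsnd, hfsnd] at this
    have hdAB : Disjoint A B := by
      rw [Finset.disjoint_left]
      intro a haA haB
      rw [hA2, Finset.mem_image] at haA
      rw [hB2, Finset.mem_image] at haB
      obtain ⟨z, hz, rfl⟩ := haA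
      obtain ⟨z', hz', heq⟩ := haB
      have h1 := congrArg Prod.fst heq
      simp only [Function.comp_apply, Prod.fst_swap] at h1
      rw [hfsnd] at h1
      have hz'K := Finset.mem_sdiff.1 hz'
      simp only [Finset.mem_insert, Finset.mem_singleton] at hz'K
      rcases hffst z hz with h | h <;> rw [h] at h1
      · exact hz'K.2 (Or.inl h1)
      · exact hz'K.2 (Or.inr h1)
    have hsub : A ∪ B ⊆ ordMis D N := Finset.union_subset hAsub hBsub
    have := Finset.card_le_card hsub
    rw [Finset.card_union_of_disjoint hdAB, hAcard, hBcard, hKcard] at this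
    omega
  · -- all distinct pairs in N are missing
    push_neg at hadj
    have hsub : N.offDiag ⊆ ordMis D N := by
      intro a ha
      rw [Finset.mem_offDiag] at ha
      exact mem_ordMis.2 ⟨ha.1, ha.2.1, hadj a.1 ha.1 a.2 ha.2.1 ha.2.2⟩
    have h1 := Finset.card_le_card hsub
    rw [Finset.offDiag_card] at h1
    rcases Nat.lt_or_ge N.card 3 with hc | hc
    · omega
    · have : 3 * N.card ≤ N.card * N.card := Nat.mul_le_mul_right _ hc
      omega
end DicritAux
namespace DicritAux

open Relation SimpleDigraph

variable {V : Type} {D : SimpleDigraph V}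

lemma count_bound (hD : D.Dicritical3) (hW3 : ¬ D.Iso dirW3)
    (hnc : ¬ ∃ k u, IsDgCycle D k u) (S : Finset V) :
    3 * (ordDig D S).card ≤ 3 * (ordMis D S).card + 4 * S.card := by
  classical
  induction S using Finset.strongInduction with
  | _ S ih =>
  by_cases hdig : ∃ u ∈ S, ∃ v ∈ S, Dg D u v
  swap
  · have hempty : ordDig D S = ∅ := by
      rw [Finset.eq_empty_iff_forall_notMem]
      rintro ⟨p, q⟩ hm
      rw [mem_ordDig] at hm
      push_neg at hdig
      exact hdig p hm.1 q hm.2.1 hm.2.2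
    rw [hempty]
    simp
  obtain ⟨u0, hu0, v0, hv0, hdg0⟩ := hdig
  set P : ℕ → Prop := fun m => ∃ x, IsPath D S m x with hPdef
  have hP2 : P 2 := by
    refine ⟨fun i => if i = 0 then u0 else v0, ?_, ?_, ?_⟩
    · intro i hi
      by_cases h : i = 0 <;> simp [h, hu0, hv0]
    · intro i hi j hj h
      have hne := dg_ne hdg0
      interval_cases i <;> interval_cases j <;> simp_all
    · intro i hi
      have h0 : i = 0 := by omega
      subst h0
      simpa using hdg0
  have hPb : ∀ m, P m → m ≤ S.card := fun m hm => hm.elim (fun x hx => path_card_le hx)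
  set M := Nat.findGreatest P S.card with hMdef
  have hM2 : 2 ≤ M := Nat.le_findGreatest (hPb 2 hP2) hP2
  have hPM : P M := Nat.findGreatest_spec (hPb 2 hP2) hP2
  obtain ⟨x, hxS, hxinj, hxch⟩ := hPM
  -- (a): the unique digon-neighbour of `x 0` in `S` is `x 1`
  have hnb : ∀ z ∈ S, Dg D z (x 0) → z = x 1 := by
    intro z hz hdz
    by_contra hne
    by_cases hzin : ∃ j, j < M ∧ z = x j
    · obtain ⟨j, hj, rfl⟩ := hzin
      have hj0 : j ≠ 0 := by
        rintro rfl
        exact dg_ne hdz rfl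
      have hj1 : j ≠ 1 := fun h => hne (by rw [h])
      refine hnc ⟨j + 1, x, by omega, ?_, ?_, ?_⟩
      · intro i hi i' hi' h
        exact hxinj i (by omega) i' (by omega) h
      · intro i hi
        exact hxch i (by omega)
      · simpa using hdz
    · push_neg at hzin
      have hPM1 : P (M + 1) := by
        refine ⟨fun i => if i = 0 then z else x (i - 1), ?_, ?_, ?_⟩
        · intro i hi
          dsimp only
          by_cases h0 : i = 0
          · simp [h0, hz]
          · simp only [if_neg h0]
            exact hxS (i - 1) (by omega)
        · intro i hi j hj h
          dsimp only at h
          by_cases h0 : i = 0 <;> by_cases h1 : j = 0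
          · omega
          · rw [if_pos h0, if_neg h1] at h
            exact absurd h (hzin (j - 1) (by omega))
          · rw [if_neg h0, if_pos h1] at h
            exact absurd h.symm (hzin (i - 1) (by omega))
          · rw [if_neg h0, if_neg h1] at h
            have := hxinj (i - 1) (by omega) (j - 1) (by omega) h
            omega
        · intro i hi
          by_cases h0 : i = 0
          · subst h0
            simpa using hdz
          · have e1 : (if i = 0 then z else x (i - 1)) = x (i - 1) := if_neg h0
            have e2 : (if i + 1 = 0 then z else x (i + 1 - 1)) = x i := by
              rw [if_neg (by omega : ¬ i + 1 = 0)]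
              congr 1
            have := hxch (i - 1) (by omega)
            rw [show i - 1 + 1 = i by omega] at this
            simpa [e1, e2] using this
      exact Nat.findGreatest_is_greatest (by omega) (hPb _ hPM1) hPM1
  by_cases hM4 : 4 ≤ M
  · -- Case A: long path, remove x 0
    have h0S : x 0 ∈ S := hxS 0 (by omega)
    have hdigc := ordDig_erase h0S (hxS 1 (by omega)) hnb (hxch 0 (by omega))
    have hne02 : x 0 ≠ x 2 := fun h => absurd (hxinj 0 (by omega) 2 (by omega) h) (by omega)
    have hne03 : x 0 ≠ x 3 := fun h => absurd (hxinj 0 (by omega) 3 (by omega) h) (by omega)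
    have hne13 : x 1 ≠ x 3 := fun h => absurd (hxinj 1 (by omega) 3 (by omega) h) (by omega)
    have hms : Ms D (x 0) (x 3) :=
      lp4 hD (hxch 0 (by omega)) (hxch 1 (by omega)) (hxch 2 (by omega)) hne02 hne03 hne13
    have hmisc := ordMis_insert2 h0S (hxS 3 (by omega)) hms
    have hIH := ih (S.erase (x 0)) (Finset.erase_ssubset h0S)
    have hcard : (S.erase (x 0)).card + 1 = S.card := Finset.card_erase_add_one h0S
    omega
  · -- Case B: short maximal path, remove the star at x 1
    set N := S.filter (fun z => Dg D (x 1) z) with hNdef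
    have hNmem : ∀ z, z ∈ N ↔ z ∈ S ∧ Dg D (x 1) z := by
      intro z
      simp [hNdef]
    have hx1S : x 1 ∈ S := hxS 1 (by omega)
    have hx0N : x 0 ∈ N := (hNmem _).2 ⟨hxS 0 (by omega), dg_symm (hxch 0 (by omega))⟩
    have hx1N : x 1 ∉ N := fun h => dg_ne ((hNmem _).1 h).2 rfl
    have hnoP4 : ¬ P 4 := fun hp => Nat.findGreatest_is_greatest (by omega) (hPb 4 hp) hp
    have hb : ∀ z ∈ N, ∀ w ∈ S, Dg D z w → w = x 1 := by
      intro z hzN w hw hzw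
      obtain ⟨hzS, hdz⟩ := (hNmem z).1 hzN
      by_contra hwx1
      have hzx1 : z ≠ x 1 := fun e => hx1N (e ▸ hzN)
      by_cases hzx0 : z = x 0
      · subst hzx0
        exact hwx1 (hnb w hw (dg_symm hzw))
      have hwx0 : w ≠ x 0 := by
        rintro rfl
        exact hzx1 (hnb z hzS hzw)
      by_cases hwN : w ∈ N
      · obtain ⟨-, hdw⟩ := (hNmem w).1 hwN
        have hwx1' : w ≠ x 1 := fun e => hx1N (e ▸ hwN)
        have hzw' : z ≠ w := dg_ne hzw
        refine hnc ⟨3, fun i => if i = 0 then x 1 else if i = 1 then z else w,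
          by omega, ?_, ?_, ?_⟩
        · intro i hi j hj h
          dsimp only at h
          interval_cases i <;> interval_cases j <;> simp only [reduceIte] at h <;>
            first
              | rfl
              | exact absurd h hzx1 | exact absurd h.symm hzx1
              | exact absurd h hwx1' | exact absurd h.symm hwx1'
              | exact absurd h hzw' | exact absurd h.symm hzw'
        · intro i hi
          have hi' : i < 2 := by omega
          interval_cases i
          · exact hdz
          · exact hzw
        · exact dg_symm hdw
      · apply hnoP4
        have h01 : x 0 ≠ x 1 := fun e => absurd (hxinj 0 (by omega) 1 (by omega) e) (by omega)
        have hzw' : z ≠ w := dg_ne hzw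
        have hch0 := hxch 0 (by omega)
        refine ⟨fun i => if i = 0 then x 0 else if i = 1 then x 1 else if i = 2 then z else w,
          ?_, ?_, ?_⟩
        · intro i hi
          interval_cases i
          · exact hxS 0 (by omega)
          · exact hx1S
          · exact hzS
          · exact hw
        · intro i hi j hj h
          dsimp only at h
          interval_cases i <;> interval_cases j <;> simp only [reduceIte] at h <;>
            first
              | rfl
              | exact absurd h h01 | exact absurd h.symm h01
              | exact absurd h hzx0 | exact absurd h.symm hzx0
              | exact absurd h hwx0 | exact absurd h.symm hwx0
              | exact absurd h hzx1 | exact absurd h.symm hzx1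
              | exact absurd h hwx1 | exact absurd h.symm hwx1
              | exact absurd h hzw' | exact absurd h.symm hzw'
        · intro i hi
          have hi' : i < 3 := by omega
          interval_cases i
          · exact hch0
          · exact hdz
          · exact hzw
    have hdigc := ordDig_star hx1S hNmem hb
    set S' := S \ insert (x 1) N with hS'def
    have hRS : insert (x 1) N ⊆ S := by
      intro t ht
      rcases Finset.mem_insert.1 ht with rfl | ht
      · exact hx1S
      · exact ((hNmem t).1 ht).1
    have hcard : S'.card + (N.card + 1) = S.card := by
      rw [hS'def, ← Finset.card_insert_of_notMem hx1N]
      exact Finset.card_sdiff_add_card_eq_card hRS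
    have hss : S' ⊂ S := by
      refine ⟨Finset.sdiff_subset, fun hsub => ?_⟩
      have := hsub hx1S
      rw [hS'def, Finset.mem_sdiff] at this
      exact this.2 (Finset.mem_insert_self _ _)
    have hIH := ih S' hss
    have hmono : ordMis D S' ⊆ ordMis D S := by
      intro p hp
      rw [mem_ordMis] at hp ⊢
      exact ⟨(Finset.mem_sdiff.1 hp.1).1, (Finset.mem_sdiff.1 hp.2.1).1, hp.2.2⟩
    by_cases hN3 : 3 ≤ N.card
    · have hrule : ∀ z1 ∈ N, ∀ z2 ∈ N, ∀ z3 ∈ N, z1 ≠ z2 → z1 ≠ z3 → z2 ≠ z3 →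
          Ms D z1 z2 ∨ Ms D z1 z3 ∨ Ms D z2 z3 := by
        intro z1 h1 z2 h2 z3 h3 n12 n13 n23
        have d1 := ((hNmem z1).1 h1).2
        have d2 := ((hNmem z2).1 h2).2
        have d3 := ((hNmem z3).1 h3).2
        have nd12 : ¬ Dg D z1 z2 := fun hd =>
          hx1N ((hb z1 h1 z2 ((hNmem z2).1 h2).1 hd) ▸ h2)
        have nd13 : ¬ Dg D z1 z3 := fun hd =>
          hx1N ((hb z1 h1 z3 ((hNmem z3).1 h3).1 hd) ▸ h3)
        have nd23 : ¬ Dg D z2 z3 := fun hd =>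
          hx1N ((hb z2 h2 z3 ((hNmem z3).1 h3).1 hd) ▸ h3)
        exact lk13 hD hW3 d1 d2 d3 n12 n13 n23 nd12 nd13 nd23
      have hmant := mantel_like hrule
      have hsub2 : ordMis D S' ∪ ordMis D N ⊆ ordMis D S := by
        intro p hp
        rcases Finset.mem_union.1 hp with hp | hp
        · exact hmono hp
        · rw [mem_ordMis] at hp ⊢
          exact ⟨((hNmem _).1 hp.1).1, ((hNmem _).1 hp.2.1).1, hp.2.2⟩
      have hdisj : Disjoint (ordMis D S') (ordMis D N) := by
        rw [Finset.disjoint_left]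
        intro p hp1 hp2
        have h1 := (mem_ordMis.1 hp1).1
        have h2 := (mem_ordMis.1 hp2).1
        rw [hS'def, Finset.mem_sdiff] at h1
        exact h1.2 (Finset.mem_insert_of_mem h2)
      have hmisc : (ordMis D S').card + 2 * (N.card - 2) ≤ (ordMis D S).card := by
        have hc2 := Finset.card_le_card hsub2
        rw [Finset.card_union_of_disjoint hdisj] at hc2
        omega
      omega
    · have hmono2 := Finset.card_le_card hmono
      have hN1 : 1 ≤ N.card := Finset.card_pos.2 ⟨x 0, hx0N⟩
      omega

end DicritAux

/-- A 3-dicritical digraph on `n` vertices distinct from `↔K3` and from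
the directed wheel `W3` has at most `C(n,2) + (2/3)·n` arcs. -/
theorem dicritical3_arcs_le
    {V : Type} [Fintype V] (D : SimpleDigraph V) (hD : D.Dicritical3)
    (hK3 : ¬ D.Iso biK3) (hW3 : ¬ D.Iso dirW3) :
    (Nat.card {p : V × V // D.Adj p.1 p.2} : ℚ) ≤
      ((Fintype.card V).choose 2 : ℚ) + (2 / 3 : ℚ) * (Fintype.card V : ℚ) := by
  classical
  set n := Fintype.card V with hn
  apply DicritAux.final_cast
  -- reduce to `6 * m ≤ 3 * n * n + n`
  by_cases hcyc : ∃ k u, DicritAux.IsDgCycle D k u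
  · obtain ⟨k, u, hc⟩ := hcyc
    by_cases hk : k % 2 = 0
    · exact (DicritAux.no_even_cycle hD hc hk).elim
    · have hk1 : k % 2 = 1 := by omega
      obtain ⟨hall, hA⟩ := DicritAux.odd_cycle_eq hD hc hk1
      by_cases hk3 : k = 3
      · subst hk3
        exact absurd (DicritAux.cyc3_biK3 hc hall hA) hK3
      · have hk5 : 5 ≤ k := by
          have h3 := hc.1
          omega
        have hm := DicritAux.cyc_card_le hc hA
        have hn5 : 5 ≤ n := by
          have hinj : Function.Injective (fun i : Fin 5 => u i.val) := by
            intro i j hij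
            have := hc.2.1 i.val (by omega) j.val (by omega) hij
            exact Fin.ext this
          calc 5 = Fintype.card (Fin 5) := (Fintype.card_fin 5).symm
            _ ≤ n := Fintype.card_le_of_injective _ hinj
        have h1 : 6 * Nat.card {p : V × V // D.Adj p.1 p.2} ≤ 12 * n := by omega
        refine le_trans h1 ?_
        nlinarith
  · -- acyclic digon structure: use the counting bound
    have hcb := DicritAux.count_bound hD hW3 hcyc Finset.univ
    set O := (Finset.univ : Finset V).offDiag with hO
    set A2 := O.filter (fun p => D.Adj p.1 p.2 ∧ D.Adj p.2 p.1) with hA2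
    set A10 := O.filter (fun p => D.Adj p.1 p.2 ∧ ¬ D.Adj p.2 p.1) with hA10
    set A01 := O.filter (fun p => ¬ D.Adj p.1 p.2 ∧ D.Adj p.2 p.1) with hA01
    set A00 := O.filter (fun p => ¬ D.Adj p.1 p.2 ∧ ¬ D.Adj p.2 p.1) with hA00
    set T := O.filter (fun p => D.Adj p.1 p.2) with hT
    -- m = T.card
    have hmT : Nat.card {p : V × V // D.Adj p.1 p.2} = T.card := by
      rw [Nat.card_eq_fintype_card, Fintype.card_subtype]
      congr 1
      ext ⟨p, q⟩
      simp only [hT, hO, Finset.mem_filter, Finset.mem_offDiag, Finset.mem_univ, true_and]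
      constructor
      · intro h
        exact ⟨fun he => D.loopless q (he ▸ h), h⟩
      · tauto
    -- splits
    have hsplit1 : A2.card + A10.card = T.card := by
      rw [hA2, hA10, hT]
      rw [← Finset.filter_filter, ← Finset.filter_filter]
      exact Finset.card_filter_add_card_filter_not _
    have hsplit2 : T.card + (O.filter (fun p => ¬ D.Adj p.1 p.2)).card = O.card := by
      rw [hT]
      exact Finset.card_filter_add_card_filter_not _
    have hsplit3 : A01.card + A00.card = (O.filter (fun p => ¬ D.Adj p.1 p.2)).card := by
      rw [hA01, hA00]
      rw [← Finset.filter_filter, ← Finset.filter_filter]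
      exact Finset.card_filter_add_card_filter_not _
    -- symmetry
    have hswap : A10.card = A01.card := by
      refine Finset.card_bij (fun p _ => Prod.swap p) ?_ ?_ ?_
      · rintro ⟨p, q⟩ hp
        simp only [hA10, hO, Finset.mem_filter, Finset.mem_offDiag, Finset.mem_univ,
          true_and] at hp
        simp only [hA01, hO, Prod.swap, Finset.mem_filter, Finset.mem_offDiag,
          Finset.mem_univ, true_and]
        exact ⟨Ne.symm hp.1, hp.2.2, hp.2.1⟩
      · intro a ha b hb hab
        exact Prod.swap_injective hab
      · rintro ⟨p, q⟩ hp
        refine ⟨(q, p), ?_, rfl⟩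
        simp only [hA01, hO, Finset.mem_filter, Finset.mem_offDiag, Finset.mem_univ,
          true_and] at hp
        simp only [hA10, hO, Finset.mem_filter, Finset.mem_offDiag, Finset.mem_univ,
          true_and]
        exact ⟨Ne.symm hp.1, hp.2.2, hp.2.1⟩
    -- identify with ordDig / ordMis
    have hdig : (DicritAux.ordDig D Finset.univ).card = A2.card := by
      congr 1
      ext ⟨p, q⟩
      rw [DicritAux.mem_ordDig, hA2, Finset.mem_filter, hO, Finset.mem_offDiag]
      constructor
      · rintro ⟨-, -, hd⟩
        exact ⟨⟨Finset.mem_univ _, Finset.mem_univ _, DicritAux.dg_ne hd⟩, hd.1, hd.2⟩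
      · rintro ⟨-, h1, h2⟩
        exact ⟨Finset.mem_univ _, Finset.mem_univ _, h1, h2⟩
    have hmis : (DicritAux.ordMis D Finset.univ).card = A00.card := by
      congr 1
      ext ⟨p, q⟩
      rw [DicritAux.mem_ordMis, hA00, Finset.mem_filter, hO, Finset.mem_offDiag]
      constructor
      · rintro ⟨-, -, hd⟩
        exact ⟨⟨Finset.mem_univ _, Finset.mem_univ _, hd.1⟩, hd.2.1, hd.2.2⟩
      · rintro ⟨⟨-, -, h0⟩, h1, h2⟩
        exact ⟨Finset.mem_univ _, Finset.mem_univ _, h0, h1, h2⟩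
    have hOcard : O.card = n * n - n := by
      rw [hO, Finset.offDiag_card, Finset.card_univ]
    have hnn : n ≤ n * n := by
      rcases Nat.eq_zero_or_pos n with h | h
      · simp [h]
      · exact Nat.le_mul_of_pos_left n h
    rw [hdig, hmis, Finset.card_univ, ← hn] at hcb
    rw [hmT]
    rw [mul_assoc]
    obtain ⟨q, hq⟩ : ∃ q, q = n * n := ⟨_, rfl⟩
    rw [← hq] at hOcard hnn ⊢
    omega
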